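/- The matrix B − (1/n)K is positive semidefinite; that is, for every vector z ∈ ℝⁿ, zᵀ B z − (1/n) zᵀ K z ≥ 0. -/

import Mathlib

open Matrix

lemma gram_quadform_helper {α β : Type*} [Fintype α] [Fintype β]
    (w : α → ℝ) (c : β → α → ℝ) :
    ∑ a, w a * ∑ b, (∑ k, c k a * c k b) * w b = ∑ k, (∑ a, w a * c k a) ^ 2 := by
  calc ∑ a, w a * ∑ b, (∑ k, c k a * c k b) * w b
      = ∑ a, ∑ b, ∑ k, (w a * c k a) * (w b * c k b) := by
        refine Finset.sum_congr rfl fun a _ => ?_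
        rw [Finset.mul_sum]
        refine Finset.sum_congr rfl fun b _ => ?_
        rw [Finset.sum_mul, Finset.mul_sum]
        exact Finset.sum_congr rfl fun k _ => by ring
    _ = ∑ a, ∑ k, ∑ b, (w a * c k a) * (w b * c k b) :=
        Finset.sum_congr rfl fun a _ => Finset.sum_comm
    _ = ∑ k, ∑ a, ∑ b, (w a * c k a) * (w b * c k b) := Finset.sum_comm
    _ = ∑ k, (∑ a, w a * c k a) * (∑ b, w b * c k b) := by
        refine Finset.sum_congr rfl fun k _ => ?_
        rw [Finset.sum_mul_sum]
    _ = ∑ k, (∑ a, w a * c k a) ^ 2 := by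
        refine Finset.sum_congr rfl fun k _ => ?_
        rw [sq]

lemma sigma_sum_eq {ι : Type*} [Fintype ι] {κ : ι → Type*} [∀ i, Fintype (κ i)]
    (f : ((i : ι) × κ i) → ℝ) :
    ∑ q, f q = ∑ i, ∑ s : κ i, f ⟨i, s⟩ := by
  rw [← Finset.univ_sigma_univ, Finset.sum_sigma]

/-- The matrix B − (1/n)K is positive semidefinite: for every z ∈ ℝⁿ,
zᵀBz − (1/n) zᵀKz ≥ 0, where K is a p.s.d. kernel matrix indexed by pairs
(i, s) (class i, index s within class i), B is the block-diagonal matrix whose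
i-th diagonal block is the i-th diagonal block of K divided by the class size
n_i, and n = Σ_i n_i is the total size. -/
theorem B_sub_avgK_posSemidef
    (g : ℕ) (hg : 1 ≤ g) (nc : Fin g → ℕ) (hnc : ∀ i, 1 ≤ nc i)
    (K : Matrix ((i : Fin g) × Fin (nc i)) ((i : Fin g) × Fin (nc i)) ℝ)
    (hK : K.PosSemidef)
    (B : Matrix ((i : Fin g) × Fin (nc i)) ((i : Fin g) × Fin (nc i)) ℝ)
    (hB : ∀ q r, B q r = if q.1 = r.1 then K q r / (nc q.1 : ℝ) else 0)
    (z : (i : Fin g) × Fin (nc i) → ℝ) :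
    0 ≤ z ⬝ᵥ B.mulVec z - (1 / ((∑ i, nc i : ℕ) : ℝ)) * (z ⬝ᵥ K.mulVec z) := by
  classical
  obtain ⟨C, hC⟩ : ∃ C : Matrix ((i : Fin g) × Fin (nc i)) ((i : Fin g) × Fin (nc i)) ℝ,
      K = star C * C := by
    open scoped MatrixOrder in exact CStarAlgebra.nonneg_iff_eq_star_mul_self.mp hK.nonneg
  set v : Fin g → ((i : Fin g) × Fin (nc i)) → ℝ :=
    fun i k => ∑ s : Fin (nc i), z ⟨i, s⟩ * C k ⟨i, s⟩ with hv
  have hn : (0:ℝ) < ((∑ i, nc i : ℕ) : ℝ) := by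
    have : 0 < ∑ i, nc i :=
      Finset.sum_pos (fun i _ => hnc i) ⟨⟨0, hg⟩, Finset.mem_univ _⟩
    exact_mod_cast this
  have hnc' : ∀ i, (0:ℝ) < (nc i : ℝ) := fun i => by exact_mod_cast hnc i
  have hKentry : ∀ q r, K q r = ∑ k, C k q * C k r := by
    intro q r
    rw [hC]
    simp [Matrix.mul_apply, Matrix.conjTranspose_apply]
  have hKz : z ⬝ᵥ K.mulVec z = ∑ k, (∑ i, v i k) ^ 2 := by
    have step : z ⬝ᵥ K.mulVec z = ∑ k, (∑ q, z q * C k q) ^ 2 := by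
      simp only [dotProduct, mulVec, dotProduct, hKentry]
      exact gram_quadform_helper z C
    rw [step]
    refine Finset.sum_congr rfl fun k _ => ?_
    congr 1
    rw [sigma_sum_eq]
  have hBz : z ⬝ᵥ B.mulVec z = ∑ k, ∑ i, (v i k) ^ 2 / (nc i : ℝ) := by
    have step : z ⬝ᵥ B.mulVec z
        = ∑ i : Fin g, (∑ k, (v i k) ^ 2) / (nc i : ℝ) := by
      simp only [dotProduct, mulVec, dotProduct]
      rw [sigma_sum_eq]
      refine Finset.sum_congr rfl fun i _ => ?_
      have inner : ∀ s : Fin (nc i),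
          (∑ r, B ⟨i, s⟩ r * z r)
            = (∑ t : Fin (nc i), K ⟨i, s⟩ ⟨i, t⟩ * z ⟨i, t⟩) / (nc i : ℝ) := by
        intro s
        rw [sigma_sum_eq, Finset.sum_eq_single_of_mem i (Finset.mem_univ i)]
        · rw [Finset.sum_div]
          refine Finset.sum_congr rfl fun t _ => ?_
          rw [hB]
          simp [div_mul_eq_mul_div]
        · intro j _ hj
          refine Finset.sum_eq_zero fun t _ => ?_
          rw [hB, if_neg, zero_mul]
          exact fun h => hj h.symm
      simp only [inner]
      have : ∑ s : Fin (nc i),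
          z ⟨i, s⟩ * ((∑ t : Fin (nc i), K ⟨i, s⟩ ⟨i, t⟩ * z ⟨i, t⟩) / (nc i : ℝ))
          = (∑ s : Fin (nc i),
              z ⟨i, s⟩ * ∑ t : Fin (nc i), K ⟨i, s⟩ ⟨i, t⟩ * z ⟨i, t⟩) / (nc i : ℝ) := by
        rw [Finset.sum_div]
        exact Finset.sum_congr rfl fun s _ => (mul_div_assoc _ _ _).symm
      rw [this]
      congr 1
      simp only [hKentry]
      exact gram_quadform_helper (fun s : Fin (nc i) => z ⟨i, s⟩)
        (fun k s => C k ⟨i, s⟩)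
    rw [step, Finset.sum_comm]
    exact Finset.sum_congr rfl fun i _ => Finset.sum_div _ _ _
  have key : (1 / ((∑ i, nc i : ℕ) : ℝ)) * (z ⬝ᵥ K.mulVec z) ≤ z ⬝ᵥ B.mulVec z := by
    rw [hKz, hBz, one_div, inv_mul_eq_div, Finset.sum_div]
    refine Finset.sum_le_sum fun k _ => ?_
    have h := Finset.sq_sum_div_le_sum_sq_div Finset.univ (fun i => v i k)
      (g := fun i => (nc i : ℝ)) (fun i _ => hnc' i)
    have hcast : ∑ i, (nc i : ℝ) = ((∑ i, nc i : ℕ) : ℝ) := by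
      rw [Nat.cast_sum]
    rwa [hcast] at h
  linarith
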